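/- Let ρ be a d×d complex positive semidefinite matrix with trace 1 (a quantum state), let P₁,…,Pₙ be d×d Hermitian complex matrices, let a₁,…,aₙ be real coefficients, and let s₁,…,s_K be nonempty, pairwise disjoint subsets of {1,…,n} whose union is {1,…,n}, such that for each k the matrices {Pᵢ : i ∈ s_k} pairwise commute. For a matrix M write ⟨M⟩ = tr(ρM), and define the (real) covariance Cov(i,j) = Re tr(ρ·(Pᵢ − ⟨Pᵢ⟩·1)·(Pⱼ − ⟨Pⱼ⟩·1)). Then for every real S > 0, the squared standard error of the grouped estimator with sample allocation S_k = |s_k|·S is at most that of the ungrouped estimator: ∑_{k=1}^{K} (1/(|s_k|·S)) · ∑_{i∈s_k} ∑_{j∈s_k} aᵢ aⱼ Cov(i,j) ≤ (1/S) · ∑_{i=1}^{n} aᵢ² Cov(i,i). -/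

import Mathlib

open Matrix Finset ComplexOrder

section Helpers
variable {d : ℕ} (ρ : Matrix (Fin d) (Fin d) ℂ)

lemma psd_trace_re_nonneg (M : Matrix (Fin d) (Fin d) ℂ) (hM : M.PosSemidef) :
    0 ≤ (M.trace).re := by
  have h : ∀ i, 0 ≤ M i i := fun i => by
    exact hM.diag_nonneg
  have : 0 ≤ M.trace := Finset.sum_nonneg fun i _ => h i
  exact (Complex.le_def.mp this).1

lemma B_nonneg (hρ : ρ.PosSemidef) (X : Matrix (Fin d) (Fin d) ℂ) (hX : X.IsHermitian) :
    0 ≤ ((ρ * (X * X)).trace).re := by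
  have h1 : (ρ * (X * X)).trace = (X * ρ * Xᴴ).trace := by
    rw [hX.eq, ← Matrix.mul_assoc, Matrix.trace_mul_cycle]
  rw [h1]
  exact psd_trace_re_nonneg _ (hρ.mul_mul_conjTranspose_same X)

lemma B_symm (hρ : ρ.PosSemidef) (X Y : Matrix (Fin d) (Fin d) ℂ)
    (hX : X.IsHermitian) (hY : Y.IsHermitian) :
    ((ρ * (X * Y)).trace).re = ((ρ * (Y * X)).trace).re := by
  have : (ρ * (Y * X)).trace = star (ρ * (X * Y)).trace := by
    rw [← Matrix.trace_conjTranspose]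
    rw [Matrix.conjTranspose_mul, Matrix.conjTranspose_mul, hX.eq, hY.eq, hρ.isHermitian.eq]
    rw [Matrix.trace_mul_cycle, Matrix.mul_assoc]
  rw [this, Complex.star_def, Complex.conj_re]

lemma B_cs (hρ : ρ.PosSemidef) (X Y : Matrix (Fin d) (Fin d) ℂ)
    (hX : X.IsHermitian) (hY : Y.IsHermitian) :
    (((ρ * (X * Y)).trace).re) ^ 2 ≤ ((ρ * (X * X)).trace).re * ((ρ * (Y * Y)).trace).re := by
  set bXX := ((ρ * (X * X)).trace).re
  set bXY := ((ρ * (X * Y)).trace).re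
  set bYY := ((ρ * (Y * Y)).trace).re
  have key : ∀ t : ℝ, 0 ≤ bYY * (t * t) + (2 * bXY) * t + bXX := by
    intro t
    have hZ : (X + (t : ℂ) • Y).IsHermitian := by
      unfold Matrix.IsHermitian
      rw [Matrix.conjTranspose_add, Matrix.conjTranspose_smul, hX.eq, hY.eq,
        Complex.star_def, Complex.conj_ofReal]
    have h0 := B_nonneg ρ hρ _ hZ
    have hexp : ((ρ * ((X + (t : ℂ) • Y) * (X + (t : ℂ) • Y))).trace).re
        = bXX + t * bXY + (t * ((ρ * (Y * X)).trace).re + t * t * bYY) := by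
      simp [add_mul, mul_add, Matrix.mul_smul, Matrix.smul_mul, smul_smul,
        Matrix.trace_add, Matrix.trace_smul, Complex.add_re, Complex.smul_re,
        bXX, bXY, bYY]
      ring
    rw [hexp, ← B_symm ρ hρ X Y hX hY] at h0
    linarith
  have hd := discrim_le_zero key
  simp only [discrim] at hd
  nlinarith
end Helpers


/-- For a quantum state `ρ`, Hermitian observables `P i` with real coefficients `a i`,
and a partition of the index set into groups of pairwise commuting observables,
the squared standard error of the grouped estimator with sample allocation
`S_k = |s_k| * S` is at most that of the ungrouped estimator. -/
theorem grouped_standard_error_le {d n K : ℕ}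
    (ρ : Matrix (Fin d) (Fin d) ℂ) (hρ : ρ.PosSemidef) (hρtr : ρ.trace = 1)
    (P : Fin n → Matrix (Fin d) (Fin d) ℂ) (hP : ∀ i, (P i).IsHermitian)
    (a : Fin n → ℝ)
    (s : Fin K → Finset (Fin n))
    (hne : ∀ k, (s k).Nonempty)
    (hdisj : ∀ k l, k ≠ l → Disjoint (s k) (s l))
    (hcover : ∀ i, ∃ k, i ∈ s k)
    (hcomm : ∀ k, ∀ i ∈ s k, ∀ j ∈ s k, P i * P j = P j * P i)
    (S : ℝ) (hS : 0 < S)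
    (expval : Matrix (Fin d) (Fin d) ℂ → ℂ)
    (hexp : ∀ M, expval M = (ρ * M).trace)
    (Cov : Fin n → Fin n → ℝ)
    (hCov : ∀ i j, Cov i j =
      ((ρ * ((P i - expval (P i) • (1 : Matrix (Fin d) (Fin d) ℂ)) *
        (P j - expval (P j) • (1 : Matrix (Fin d) (Fin d) ℂ)))).trace).re) :
    ∑ k, (1 / (((s k).card : ℝ) * S)) * ∑ i ∈ s k, ∑ j ∈ s k, a i * a j * Cov i j ≤
      (1 / S) * ∑ i, (a i) ^ 2 * Cov i i := by
  -- the centered observables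
  set Q : Fin n → Matrix (Fin d) (Fin d) ℂ :=
    fun i => P i - expval (P i) • (1 : Matrix (Fin d) (Fin d) ℂ) with hQdef
  have hQ : ∀ i, (Q i).IsHermitian := by
    intro i
    have hstar : star (expval (P i)) = expval (P i) := by
      rw [hexp, ← Matrix.trace_conjTranspose, Matrix.conjTranspose_mul,
        (hP i).eq, hρ.isHermitian.eq, Matrix.trace_mul_comm]
    unfold Matrix.IsHermitian
    rw [hQdef]
    simp only [Matrix.conjTranspose_sub, (hP i).eq, Matrix.conjTranspose_smul,
      Matrix.conjTranspose_one, hstar]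
  have hCovQ : ∀ i j, Cov i j = ((ρ * (Q i * Q j)).trace).re := fun i j => hCov i j
  -- diagonal nonneg and Cauchy–Schwarz
  have hdiag : ∀ i, 0 ≤ Cov i i := fun i => by
    rw [hCovQ]; exact B_nonneg ρ hρ _ (hQ i)
  have hcs : ∀ i j, (Cov i j) ^ 2 ≤ Cov i i * Cov j j := fun i j => by
    rw [hCovQ i j, hCovQ i i, hCovQ j j]; exact B_cs ρ hρ _ _ (hQ i) (hQ j)
  set g : Fin n → ℝ := fun i => |a i| * Real.sqrt (Cov i i) with hg
  have habs : ∀ i j, a i * a j * Cov i j ≤ g i * g j := by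
    intro i j
    have h1 : |Cov i j| ≤ Real.sqrt (Cov i i) * Real.sqrt (Cov j j) := by
      rw [← Real.sqrt_sq_eq_abs, ← Real.sqrt_mul (hdiag i)]
      exact Real.sqrt_le_sqrt (hcs i j)
    calc a i * a j * Cov i j ≤ |a i * a j * Cov i j| := le_abs_self _
      _ = |a i| * |a j| * |Cov i j| := by rw [abs_mul, abs_mul]
      _ ≤ |a i| * |a j| * (Real.sqrt (Cov i i) * Real.sqrt (Cov j j)) := by
          apply mul_le_mul_of_nonneg_left h1 (by positivity)
      _ = g i * g j := by rw [hg]; ring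
  -- per-group bound
  have hgroup : ∀ k, (1 / (((s k).card : ℝ) * S)) *
      ∑ i ∈ s k, ∑ j ∈ s k, a i * a j * Cov i j ≤
      (1 / S) * ∑ i ∈ s k, (a i) ^ 2 * Cov i i := by
    intro k
    have hm : (0 : ℝ) < ((s k).card : ℝ) := by
      exact_mod_cast Finset.card_pos.mpr (hne k)
    have h1 : ∑ i ∈ s k, ∑ j ∈ s k, a i * a j * Cov i j ≤ (∑ i ∈ s k, g i) ^ 2 := by
      rw [sq, Finset.sum_mul_sum]
      exact Finset.sum_le_sum fun i _ => Finset.sum_le_sum fun j _ => habs i j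
    have h2 : (∑ i ∈ s k, g i) ^ 2 ≤ ((s k).card : ℝ) * ∑ i ∈ s k, (g i) ^ 2 :=
      sq_sum_le_card_mul_sum_sq
    have h3 : ∀ i, (g i) ^ 2 = (a i) ^ 2 * Cov i i := by
      intro i
      rw [hg]
      rw [mul_pow, sq_abs, Real.sq_sqrt (hdiag i)]
    have h4 : ∑ i ∈ s k, (g i) ^ 2 = ∑ i ∈ s k, (a i) ^ 2 * Cov i i :=
      Finset.sum_congr rfl fun i _ => h3 i
    have h5 : ∑ i ∈ s k, ∑ j ∈ s k, a i * a j * Cov i j ≤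
        ((s k).card : ℝ) * ∑ i ∈ s k, (a i) ^ 2 * Cov i i := by
      calc _ ≤ (∑ i ∈ s k, g i) ^ 2 := h1
        _ ≤ ((s k).card : ℝ) * ∑ i ∈ s k, (g i) ^ 2 := h2
        _ = _ := by rw [h4]
    calc (1 / (((s k).card : ℝ) * S)) * ∑ i ∈ s k, ∑ j ∈ s k, a i * a j * Cov i j
        ≤ (1 / (((s k).card : ℝ) * S)) *
            (((s k).card : ℝ) * ∑ i ∈ s k, (a i) ^ 2 * Cov i i) :=
          mul_le_mul_of_nonneg_left h5 (by positivity)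
      _ = (1 / S) * ∑ i ∈ s k, (a i) ^ 2 * Cov i i := by
          field_simp
  -- sum up using the partition
  have hpart : ∑ k, ∑ i ∈ s k, (a i) ^ 2 * Cov i i = ∑ i, (a i) ^ 2 * Cov i i := by
    have hbU : (Finset.univ : Finset (Fin K)).biUnion s = Finset.univ := by
      apply Finset.eq_univ_of_forall
      intro i
      obtain ⟨k, hk⟩ := hcover i
      exact Finset.mem_biUnion.mpr ⟨k, Finset.mem_univ k, hk⟩
    rw [← hbU, Finset.sum_biUnion]
    intro k _ l _ hkl
    exact hdisj k l hkl
  calc ∑ k, (1 / (((s k).card : ℝ) * S)) * ∑ i ∈ s k, ∑ j ∈ s k, a i * a j * Cov i j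
      ≤ ∑ k, (1 / S) * ∑ i ∈ s k, (a i) ^ 2 * Cov i i :=
        Finset.sum_le_sum fun k _ => hgroup k
    _ = (1 / S) * ∑ k, ∑ i ∈ s k, (a i) ^ 2 * Cov i i := by rw [Finset.mul_sum]
    _ = (1 / S) * ∑ i, (a i) ^ 2 * Cov i i := by rw [hpart]
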